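/- arXiv:1712.02948 — 3 statements merged into one kernel-verified Lean document; each statement's English description precedes it below -/
import Mathlib

section
/- Let H₁, H₂, H₃ be Hilbert spaces and T : H₁ → H₂, S : H₂ → H₃ closed densely defined linear operators with S∘T = 0. Suppose there is c > 0 such that ‖h‖²_{H₂} ≤ c(‖T*h‖²_{H₁} + ‖Sh‖²_{H₃}) for all h ∈ D(T*) ∩ D(S). Then for every g ∈ ker S and every h ∈ D(T*) ∩ D(S), one has |⟨g,h⟩_{H₂}| ≤ √c · ‖g‖_{H₂} · ‖T*h‖_{H₁}. -/
open scoped ComplexInnerProductSpace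

/-- Hörmander's basic inequality: `T : H₁ → H₂`, `S : H₂ → H₃` closed densely
defined operators with `S ∘ T = 0` and the a priori estimate
`‖h‖² ≤ c(‖T*h‖² + ‖Sh‖²)` on `D(T*) ∩ D(S)`.  Then for every `g ∈ ker S` and
every `h ∈ D(T*) ∩ D(S)`, `|⟨g,h⟩| ≤ √c ‖g‖ ‖T*h‖`. -/
theorem hormander_basic_estimate
    {H1 H2 H3 : Type*}
    [NormedAddCommGroup H1] [InnerProductSpace ℂ H1] [CompleteSpace H1]
    [NormedAddCommGroup H2] [InnerProductSpace ℂ H2] [CompleteSpace H2]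
    [NormedAddCommGroup H3] [InnerProductSpace ℂ H3] [CompleteSpace H3]
    (T : H1 →ₗ.[ℂ] H2) (S : H2 →ₗ.[ℂ] H3)
    (hTdense : Dense (T.domain : Set H1)) (hSdense : Dense (S.domain : Set H2))
    (hTclosed : IsClosed (T.graph : Set (H1 × H2)))
    (hSclosed : IsClosed (S.graph : Set (H2 × H3)))
    (hST : ∀ x : T.domain, ∃ hx : (T x : H2) ∈ S.domain, S ⟨T x, hx⟩ = 0)
    (c : ℝ) (hc : 0 < c)
    (hest : ∀ (h : H2) (h1 : h ∈ T.adjoint.domain) (h2 : h ∈ S.domain),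
      ‖h‖ ^ 2 ≤ c * (‖T.adjoint ⟨h, h1⟩‖ ^ 2 + ‖S ⟨h, h2⟩‖ ^ 2))
    (g : H2) (hgdom : g ∈ S.domain) (hg : S ⟨g, hgdom⟩ = 0)
    (h : H2) (h1 : h ∈ T.adjoint.domain) (h2 : h ∈ S.domain) :
    ‖(inner ℂ g h : ℂ)‖ ≤ Real.sqrt c * ‖g‖ * ‖T.adjoint ⟨h, h1⟩‖ := by
  classical
  -- the kernel of `S` as a submodule of `H2`
  set K : Submodule ℂ H2 := S.graph.comap (LinearMap.inl ℂ H2 H3) with hK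
  have memK : ∀ x : H2, x ∈ K ↔ ∃ hx : x ∈ S.domain, S ⟨x, hx⟩ = 0 := by
    intro x
    constructor
    · intro hx
      have : (x, (0 : H3)) ∈ S.graph := hx
      rw [LinearPMap.mem_graph_iff] at this
      obtain ⟨y, hy1, hy2⟩ := this
      have hy1' : (y : H2) = x := hy1
      refine ⟨hy1' ▸ y.2, ?_⟩
      have hyx : (⟨x, hy1' ▸ y.2⟩ : S.domain) = y := Subtype.ext hy1'.symm
      rw [hyx]
      simpa using hy2
    · rintro ⟨hx, hx0⟩
      show (x, (0 : H3)) ∈ S.graph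
      rw [LinearPMap.mem_graph_iff]
      exact ⟨⟨x, hx⟩, rfl, hx0⟩
  have hKclosed : IsClosed (K : Set H2) := by
    have : (K : Set H2) = (fun x : H2 => (x, (0 : H3))) ⁻¹' (S.graph : Set (H2 × H3)) := by
      ext x; rfl
    rw [this]
    exact hSclosed.preimage (by fun_prop)
  haveI : CompleteSpace K := hKclosed.completeSpace_coe
  set k : H2 := (K.orthogonalProjection h : H2) with hk
  have hkK : k ∈ K := (K.orthogonalProjection h).2
  set w : H2 := h - k with hw
  have hwKo : w ∈ Kᗮ := K.sub_starProjection_mem_orthogonal h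
  -- `w` is in the adjoint domain with `T† w = 0`
  have hrange : ∀ x : T.domain, (T x : H2) ∈ K := fun x => (memK _).2 (hST x)
  have hwinner : ∀ x : T.domain, (inner ℂ ((0 : H1)) ((x : H1)) : ℂ) = inner ℂ w (T x) := by
    intro x
    have h0 : (inner ℂ (w : H2) ((T x : H2)) : ℂ) = 0 :=
      inner_eq_zero_symm.1 (hwKo _ (hrange x))
    rw [inner_zero_left, h0]
  have hwdom : w ∈ T.adjoint.domain :=
    LinearPMap.mem_adjoint_domain_of_exists _ ⟨0, hwinner⟩
  have hwzero : T.adjoint ⟨w, hwdom⟩ = 0 :=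
    LinearPMap.adjoint_apply_eq hTdense _ hwinner
  -- `k` is in the adjoint domain with the same adjoint value as `h`
  have hkdom : k ∈ T.adjoint.domain := by
    have : h - w ∈ T.adjoint.domain := Submodule.sub_mem _ h1 hwdom
    simpa [hw] using this
  have hkval : T.adjoint ⟨k, hkdom⟩ = T.adjoint ⟨h, h1⟩ := by
    have : (⟨k, hkdom⟩ : T.adjoint.domain) = ⟨h, h1⟩ - ⟨w, hwdom⟩ := by
      ext; simp [hw]
    rw [this, LinearPMap.map_sub, hwzero, sub_zero]
  obtain ⟨hkSdom, hkS0⟩ := (memK k).1 hkK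
  -- a priori estimate applied to `k`
  have hest2 : ‖k‖ ^ 2 ≤ c * ‖T.adjoint ⟨h, h1⟩‖ ^ 2 := by
    have := hest k hkdom hkSdom
    rwa [hkS0, hkval, norm_zero, zero_pow (by norm_num), add_zero] at this
  have hknorm : ‖k‖ ≤ Real.sqrt c * ‖T.adjoint ⟨h, h1⟩‖ := by
    have h0 : (0:ℝ) ≤ Real.sqrt c * ‖T.adjoint ⟨h, h1⟩‖ :=
      mul_nonneg (Real.sqrt_nonneg c) (norm_nonneg _)
    nlinarith [Real.sq_sqrt hc.le, norm_nonneg k, Real.sqrt_nonneg c,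
      norm_nonneg (T.adjoint ⟨h, h1⟩)]
  -- reduce the inner product to `⟪g, k⟫`
  have hgK : g ∈ K := (memK g).2 ⟨hgdom, hg⟩
  have hinner : (inner ℂ g h : ℂ) = inner ℂ g k := by
    have hzero : (inner ℂ g w : ℂ) = 0 := hwKo g hgK
    have : h = k + w := by simp [hw]
    rw [this, inner_add_right, hzero, add_zero]
  calc ‖(inner ℂ g h : ℂ)‖ = ‖(inner ℂ g k : ℂ)‖ := by rw [hinner]
    _ ≤ ‖g‖ * ‖k‖ := norm_inner_le_norm g k
    _ ≤ ‖g‖ * (Real.sqrt c * ‖T.adjoint ⟨h, h1⟩‖) :=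
        mul_le_mul_of_nonneg_left hknorm (norm_nonneg g)
    _ = Real.sqrt c * ‖g‖ * ‖T.adjoint ⟨h, h1⟩‖ := by ring
end

section
/- Let H₁, H₂, H₃ be Hilbert spaces and T : H₁ → H₂, S : H₂ → H₃ closed densely defined operators with S∘T = 0, satisfying the a priori estimate ‖h‖²_{H₂} ≤ c(‖T*h‖²_{H₁} + ‖Sh‖²_{H₃}) for all h ∈ D(T*)∩D(S), where D(T*)∩D(S) is dense in H₂. Then for every g ∈ ker S there exists f ∈ H₁ with Tf = g and ‖f‖_{H₁} ≤ √c·‖g‖_{H₂}. -/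
open scoped ComplexInnerProductSpace

/-- Hörmander's abstract solvability lemma: `T : H₁ → H₂`, `S : H₂ → H₃` closed
densely defined operators with `S ∘ T = 0`, satisfying the a priori estimate
`‖h‖² ≤ c(‖T*h‖² + ‖Sh‖²)` on the dense subspace `D(T*) ∩ D(S)` of `H₂`.  Then
for every `g ∈ ker S` there is `f ∈ D(T)` with `Tf = g` and `‖f‖ ≤ √c ‖g‖`. -/
theorem hormander_solvability
    {H1 H2 H3 : Type*}
    [NormedAddCommGroup H1] [InnerProductSpace ℂ H1] [CompleteSpace H1]
    [NormedAddCommGroup H2] [InnerProductSpace ℂ H2] [CompleteSpace H2]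
    [NormedAddCommGroup H3] [InnerProductSpace ℂ H3] [CompleteSpace H3]
    (T : H1 →ₗ.[ℂ] H2) (S : H2 →ₗ.[ℂ] H3)
    (hTdense : Dense (T.domain : Set H1)) (hSdense : Dense (S.domain : Set H2))
    (hTclosed : IsClosed (T.graph : Set (H1 × H2)))
    (hSclosed : IsClosed (S.graph : Set (H2 × H3)))
    (hST : ∀ x : T.domain, ∃ hx : (T x : H2) ∈ S.domain, S ⟨T x, hx⟩ = 0)
    (hdense : Dense ({h : H2 | h ∈ T.adjoint.domain ∧ h ∈ S.domain} : Set H2))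
    (c : ℝ) (hc : 0 < c)
    (hest : ∀ (h : H2) (h1 : h ∈ T.adjoint.domain) (h2 : h ∈ S.domain),
      ‖h‖ ^ 2 ≤ c * (‖T.adjoint ⟨h, h1⟩‖ ^ 2 + ‖S ⟨h, h2⟩‖ ^ 2))
    (g : H2) (hgdom : g ∈ S.domain) (hg : S ⟨g, hgdom⟩ = 0) :
    ∃ (f : H1) (hf : f ∈ T.domain), T ⟨f, hf⟩ = g ∧ ‖f‖ ≤ Real.sqrt c * ‖g‖ := by
  classical
  -- the kernel of `S` as a closed submodule of `H2`
  set N : Submodule ℂ H2 := S.graph.comap (LinearMap.inl ℂ H2 H3) with hN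
  have hmemN : ∀ x : H2, x ∈ N ↔ (x, (0 : H3)) ∈ S.graph := fun x => Iff.rfl
  have hNclosed : IsClosed (N : Set H2) := by
    have : (N : Set H2) = (fun x : H2 => (x, (0 : H3))) ⁻¹' (S.graph : Set (H2 × H3)) := rfl
    rw [this]
    exact hSclosed.preimage (continuous_id.prodMk continuous_const)
  haveI : CompleteSpace N := hNclosed.completeSpace_coe
  have hgN : g ∈ N := by
    rw [hmemN, LinearPMap.mem_graph_iff]
    exact ⟨⟨g, hgdom⟩, rfl, hg⟩
  have hTxN : ∀ x : T.domain, (T x : H2) ∈ N := by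
    intro x
    obtain ⟨hx, hx0⟩ := hST x
    rw [hmemN, LinearPMap.mem_graph_iff]
    exact ⟨⟨T x, hx⟩, rfl, hx0⟩
  -- key estimate
  have key : ∀ v : T.adjoint.domain,
      ‖(inner ℂ g (v : H2) : ℂ)‖ ≤ (Real.sqrt c * ‖g‖) * ‖T.adjoint v‖ := by
    intro v
    set v₁ : H2 := (N.orthogonalProjectionOnto (v : H2) : H2) with hv₁
    set v₂ : H2 := (v : H2) - v₁ with hv₂
    have hv₁N : v₁ ∈ N := (N.orthogonalProjectionOnto (v : H2)).2
    have hv₂N : v₂ ∈ Nᗮ := N.sub_starProjection_mem_orthogonal _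
    -- v₂ is in the adjoint domain and T† v₂ = 0
    have hv₂inner : ∀ x : T.domain, (inner ℂ (0 : H1) (x : H1) : ℂ) = inner ℂ v₂ (T x) := by
      intro x
      rw [inner_zero_left]
      exact (Submodule.mem_orthogonal' _ _ |>.mp hv₂N (T x) (hTxN x)).symm
    have hv₂dom : v₂ ∈ T.adjoint.domain :=
      LinearPMap.mem_adjoint_domain_of_exists _ ⟨0, hv₂inner⟩
    have hv₂adj : T.adjoint ⟨v₂, hv₂dom⟩ = 0 :=
      LinearPMap.adjoint_apply_eq hTdense _ hv₂inner
    have hv₁dom : v₁ ∈ T.adjoint.domain := by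
      have : v₁ = (v : H2) - v₂ := by rw [hv₂]; abel
      rw [this]; exact sub_mem v.2 hv₂dom
    have hv₁adj : T.adjoint ⟨v₁, hv₁dom⟩ = T.adjoint v := by
      have heq : (⟨v₁, hv₁dom⟩ : T.adjoint.domain) = v - ⟨v₂, hv₂dom⟩ := by
        ext; simp [hv₂]
      rw [heq, LinearPMap.map_sub, hv₂adj, sub_zero]
    -- v₁ is in the domain of S with S v₁ = 0
    obtain ⟨y, hy1, hy2⟩ := (LinearPMap.mem_graph_iff S).mp ((hmemN v₁).mp hv₁N)
    have hy1' : (y : H2) = v₁ := hy1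
    have hy2' : S y = 0 := hy2
    have hv₁S : v₁ ∈ S.domain := hy1' ▸ y.2
    have hSv₁ : S ⟨v₁, hv₁S⟩ = 0 := by
      have : (⟨v₁, hv₁S⟩ : S.domain) = y := by ext; exact hy1'.symm
      rw [this, hy2']
    -- the a priori estimate applied to v₁
    have hest₁ : ‖v₁‖ ^ 2 ≤ c * ‖T.adjoint v‖ ^ 2 := by
      have := hest v₁ hv₁dom hv₁S
      rwa [hSv₁, norm_zero, zero_pow (by norm_num), add_zero, hv₁adj] at this
    have hnv₁ : ‖v₁‖ ≤ Real.sqrt c * ‖T.adjoint v‖ := by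
      have h2 := Real.sqrt_le_sqrt hest₁
      rwa [Real.sqrt_sq (norm_nonneg _), Real.sqrt_mul hc.le,
        Real.sqrt_sq (norm_nonneg _)] at h2
    -- ⟪g, v⟫ = ⟪g, v₁⟫
    have hsplit : (inner ℂ g (v : H2) : ℂ) = inner ℂ g v₁ := by
      have : (v : H2) = v₁ + v₂ := by rw [hv₂]; abel
      rw [this, inner_add_right, Submodule.mem_orthogonal _ _ |>.mp hv₂N g hgN, add_zero]
    calc ‖(inner ℂ g (v : H2) : ℂ)‖ = ‖(inner ℂ g v₁ : ℂ)‖ := by rw [hsplit]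
      _ ≤ ‖g‖ * ‖v₁‖ := norm_inner_le_norm _ _
      _ ≤ ‖g‖ * (Real.sqrt c * ‖T.adjoint v‖) := by
          exact mul_le_mul_of_nonneg_left hnv₁ (norm_nonneg g)
      _ = (Real.sqrt c * ‖g‖) * ‖T.adjoint v‖ := by ring
  -- the linear functional on the range of T†
  set A : T.adjoint.domain →ₗ[ℂ] H1 := T.adjoint.toFun with hA
  have hAapp : ∀ v : T.adjoint.domain, A v = T.adjoint v := fun v => rfl
  set ψ : T.adjoint.domain →ₗ[ℂ] ℂ :=
    ((innerSL ℂ g).toLinearMap).comp T.adjoint.domain.subtype with hψ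
  have hψapp : ∀ v : T.adjoint.domain, ψ v = inner ℂ g (v : H2) := fun v => rfl
  have hker : LinearMap.ker A ≤ LinearMap.ker ψ := by
    intro v hv
    rw [LinearMap.mem_ker] at hv ⊢
    have h0 : ‖(inner ℂ g (v : H2) : ℂ)‖ ≤ 0 := by
      have := key v
      rw [← hAapp, hv, norm_zero, mul_zero] at this
      exact this
    rw [hψapp]
    exact norm_le_zero_iff.mp h0
  set ℓ₀ : LinearMap.range A →ₗ[ℂ] ℂ :=
    ((LinearMap.ker A).liftQ ψ hker).comp (A.quotKerEquivRange).symm.toLinearMap with hℓ₀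
  have hℓ₀app : ∀ v : T.adjoint.domain,
      ℓ₀ ⟨A v, LinearMap.mem_range_self A v⟩ = inner ℂ g (v : H2) := by
    intro v
    have h1 : A.quotKerEquivRange (Submodule.Quotient.mk v)
        = ⟨A v, LinearMap.mem_range_self A v⟩ := by
      ext; exact A.quotKerEquivRange_apply_mk v
    rw [hℓ₀, LinearMap.comp_apply, ← h1]
    erw [LinearEquiv.symm_apply_apply]
    rw [Submodule.liftQ_apply]
    exact hψapp v
  have hbound : ∀ x : LinearMap.range A, ‖ℓ₀ x‖ ≤ (Real.sqrt c * ‖g‖) * ‖x‖ := by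
    rintro ⟨x, v, rfl⟩
    have h1 : ℓ₀ ⟨A v, ⟨v, rfl⟩⟩ = inner ℂ g (v : H2) := hℓ₀app v
    rw [h1]
    have h2 : ‖(⟨A v, ⟨v, rfl⟩⟩ : LinearMap.range A)‖ = ‖T.adjoint v‖ := rfl
    rw [h2]
    exact key v
  set ℓ : LinearMap.range A →L[ℂ] ℂ := ℓ₀.mkContinuous _ hbound with hℓ
  have hℓnorm : ‖ℓ‖ ≤ Real.sqrt c * ‖g‖ :=
    ℓ₀.mkContinuous_norm_le (by positivity) hbound
  obtain ⟨L, hLext, hLnorm⟩ := exists_extension_norm_eq (LinearMap.range A) ℓ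
  set f : H1 := (InnerProductSpace.toDual ℂ H1).symm L with hfdef
  have hfnorm : ‖f‖ ≤ Real.sqrt c * ‖g‖ := by
    rw [hfdef, LinearIsometryEquiv.norm_map, hLnorm]
    exact hℓnorm
  have hfinner : ∀ v : T.adjoint.domain,
      (inner ℂ f (T.adjoint v) : ℂ) = inner ℂ g (v : H2) := by
    intro v
    rw [hfdef, InnerProductSpace.toDual_symm_apply]
    have h1 : L (T.adjoint v) = ℓ ⟨A v, LinearMap.mem_range_self A v⟩ :=
      hLext ⟨A v, LinearMap.mem_range_self A v⟩
    rw [h1, hℓ, LinearMap.mkContinuous_apply]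
    exact hℓ₀app v
  -- show (f, g) ∈ T.graph using the double orthogonal complement of the graph
  set e : WithLp 2 (H1 × H2) ≃L[ℂ] H1 × H2 :=
    WithLp.prodContinuousLinearEquiv 2 ℂ H1 H2 with he
  set G : Submodule ℂ (WithLp 2 (H1 × H2)) :=
    T.graph.comap (e.toLinearEquiv : WithLp 2 (H1 × H2) →ₗ[ℂ] H1 × H2) with hG
  have hGmem : ∀ z : WithLp 2 (H1 × H2), z ∈ G ↔ e z ∈ T.graph := fun z => Iff.rfl
  have hGclosed : IsClosed (G : Set (WithLp 2 (H1 × H2))) :=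
    hTclosed.preimage e.continuous
  have hGoo : Gᗮᗮ = G := by
    rw [Submodule.orthogonal_orthogonal_eq_closure,
      hGclosed.submodule_topologicalClosure_eq]
  set z : WithLp 2 (H1 × H2) := e.symm (f, g) with hz
  have hzG : z ∈ Gᗮᗮ := by
    rw [Submodule.mem_orthogonal]
    intro u hu
    rw [Submodule.mem_orthogonal] at hu
    have hu' : ∀ x : T.domain,
        (inner ℂ (x : H1) ((e u).1) : ℂ) + inner ℂ (T x : H2) ((e u).2) = 0 := by
      intro x
      have hw : e.symm ((x : H1), (T x : H2)) ∈ G := by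
        rw [hGmem, e.apply_symm_apply]
        exact T.mem_graph x
      have h0 := hu _ hw
      rw [WithLp.prod_inner_apply] at h0
      exact h0
    have hu₂inner : ∀ x : T.domain,
        (inner ℂ (-(e u).1) (x : H1) : ℂ) = inner ℂ ((e u).2) (T x : H2) := by
      intro x
      have h := congrArg (starRingEnd ℂ) (hu' x)
      simp only [map_add, inner_conj_symm, map_zero] at h
      rw [inner_neg_left]
      linear_combination -h
    have hu₂dom : (e u).2 ∈ T.adjoint.domain :=
      LinearPMap.mem_adjoint_domain_of_exists _ ⟨_, hu₂inner⟩
    have hu₂adj : T.adjoint ⟨(e u).2, hu₂dom⟩ = -(e u).1 :=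
      LinearPMap.adjoint_apply_eq hTdense _ hu₂inner
    have hzinner : (inner ℂ u z : ℂ) = inner ℂ ((e u).1) f + inner ℂ ((e u).2) g := by
      rw [WithLp.prod_inner_apply]
      rfl
    rw [hzinner]
    have h1 : (inner ℂ ((e u).1) f : ℂ) = - inner ℂ ((e u).2) g := by
      have h2 : (e u).1 = -(T.adjoint ⟨(e u).2, hu₂dom⟩) := by rw [hu₂adj, neg_neg]
      rw [h2, inner_neg_left, neg_inj]
      have h3 := congrArg (starRingEnd ℂ) (hfinner ⟨(e u).2, hu₂dom⟩)
      rw [inner_conj_symm, inner_conj_symm] at h3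
      exact h3
    rw [h1, neg_add_cancel]
  have hfg : ((f, g) : H1 × H2) ∈ T.graph := by
    have h1 : z ∈ G := hGoo ▸ hzG
    have h2 := (hGmem z).mp h1
    rwa [hz, e.apply_symm_apply] at h2
  obtain ⟨x, hx1, hx2⟩ := (LinearPMap.mem_graph_iff T).mp hfg
  have hx1' : (x : H1) = f := hx1
  have hx2' : T x = g := hx2
  refine ⟨f, hx1' ▸ x.2, ?_, hfnorm⟩
  have : (⟨f, hx1' ▸ x.2⟩ : T.domain) = x := by ext; exact hx1'.symm
  rw [this, hx2']
end

section
/- Let χ : ℝ → ℝ be a convex increasing function of class C¹ and let ν : (−∞, c) → [0,∞) be a monotone increasing function arising as ν(r) = ∫_{B_r} θ for a positive measure θ (so that θ((−∞,r]) = ν(r) in the pushforward sense). Then ∫_{(−∞,r)} χ'(t) dν(t) + χ'(r−0)·(ν(r) − ν(r−)) ≤ χ'(r−0)·ν(r); in particular, for ν continuous, ∫_{B_r} (χ∘φ)-weighted mass equals at most χ'(r−0)·ν(φ,r,T), specializing with χ(t) = e^{2t} to ν(φ,r,T) = e^{−2r} ∫_{B_{r,φ}} T∧(½ dd^c e^{2φ}).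 -/
open MeasureTheory Set Filter

/-- Change of weight estimate for Lelong numbers (Demailly's Formula (5.5)):
if `χ` is a convex increasing `C¹` function and `ν(r) = θ((−∞,r])` for a
positive measure `θ` (finite up to level `r < c`), then
`∫_{(−∞,r)} χ'(t) dθ(t) + χ'(r−0)·(ν(r) − ν(r−)) ≤ χ'(r−0)·ν(r)`;
in particular, specializing to `χ(t) = e^{2t}`,
`∫_{(−∞,r)} 2e^{2t} dθ(t) ≤ 2e^{2r}·ν(r)` when `θ({r}) = 0`. -/
theorem convex_weight_mass_estimate
    (χ : ℝ → ℝ) (hconv : ConvexOn ℝ Set.univ χ) (hmono : Monotone χ)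
    (hdiff : Differentiable ℝ χ) (hC1 : Continuous (deriv χ))
    (θ : Measure ℝ) (c r : ℝ) (hr : r < c)
    (hfin : θ (Iic r) ≠ ⊤) :
    ((∫ t in Iio r, deriv χ t ∂θ) + deriv χ r * (θ {r}).toReal
        ≤ deriv χ r * (θ (Iic r)).toReal) ∧
    (θ {r} = 0 →
      (∫ t in Iio r, 2 * Real.exp (2 * t) ∂θ)
        ≤ 2 * Real.exp (2 * r) * (θ (Iic r)).toReal) := by
  have hIio_fin : θ (Iio r) < ⊤ :=
    lt_of_le_of_lt (measure_mono Iio_subset_Iic_self) hfin.lt_top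
  haveI : IsFiniteMeasure (θ.restrict (Iio r)) := by
    constructor
    rw [Measure.restrict_apply_univ]
    exact hIio_fin
  -- split measure of Iic r
  have hsplit : θ (Iic r) = θ (Iio r) + θ {r} := by
    rw [← Iio_union_right, measure_union (by simp) (measurableSet_singleton r)]
  have hr_fin : θ {r} < ⊤ :=
    lt_of_le_of_lt (measure_mono (by simp)) hfin.lt_top
  have htoReal : (θ (Iic r)).toReal = (θ (Iio r)).toReal + (θ {r}).toReal := by
    rw [hsplit, ENNReal.toReal_add hIio_fin.ne hr_fin.ne]
  -- derivative is nonnegative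
  have hd0 : ∀ t, 0 ≤ deriv χ t := by
    intro t
    have h := (hdiff t).hasDerivAt
    rw [hasDerivAt_iff_tendsto_slope] at h
    have h2 : Tendsto (slope χ t) (nhdsWithin t (Ioi t)) (nhds (deriv χ t)) :=
      h.mono_left (nhdsWithin_mono t (fun x hx => ne_of_gt hx))
    refine ge_of_tendsto h2 ?_
    filter_upwards [self_mem_nhdsWithin] with x hx
    rw [slope_def_field]
    exact div_nonneg (sub_nonneg.2 (hmono (le_of_lt hx))) (sub_nonneg.2 (le_of_lt hx))
  -- derivative is monotone
  have hdm : MonotoneOn (deriv χ) Set.univ :=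
    hconv.monotoneOn_deriv (fun x _ => hdiff x)
  have hdmono : ∀ t, t ≤ r → deriv χ t ≤ deriv χ r :=
    fun t ht => hdm (mem_univ t) (mem_univ r) ht
  -- generic bound
  have key : ∀ f : ℝ → ℝ, Continuous f → (∀ t, 0 ≤ f t) → (∀ t, t ≤ r → f t ≤ f r) →
      (∫ t in Iio r, f t ∂θ) ≤ f r * (θ (Iio r)).toReal := by
    intro f hf hf0 hfm
    have hint : Integrable f (θ.restrict (Iio r)) := by
      refine Integrable.mono' (integrable_const (f r)) hf.aestronglyMeasurable ?_
      rw [ae_restrict_iff' measurableSet_Iio]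
      filter_upwards with x hx
      rw [Real.norm_eq_abs, abs_of_nonneg (hf0 x)]
      exact hfm x hx.le
    calc (∫ t in Iio r, f t ∂θ) ≤ ∫ _ in Iio r, f r ∂θ := by
          refine integral_mono_ae hint (integrable_const _) ?_
          rw [EventuallyLE, ae_restrict_iff' measurableSet_Iio]
          filter_upwards with x hx
          exact hfm x hx.le
      _ = f r * (θ (Iio r)).toReal := by
          rw [setIntegral_const, smul_eq_mul, mul_comm]; rfl
  constructor
  · have h1 := key (deriv χ) hC1 hd0 hdmono
    have := hd0 r
    nlinarith [h1, htoReal]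
  · intro hz
    have h2 := key (fun t => 2 * Real.exp (2 * t))
      (by continuity)
      (fun t => by positivity)
      (fun t ht => by
        have h := Real.exp_le_exp.2 (by linarith : 2 * t ≤ 2 * r)
        show 2 * Real.exp (2 * t) ≤ 2 * Real.exp (2 * r)
        linarith)
    have hIic : θ (Iic r) = θ (Iio r) := by rw [hsplit, hz, add_zero]
    rw [hIic]
    exact h2
end
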